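/- Let q be a power of a prime p and let 𝒪 : 𝔽_q^× → ℤ_{≥0} be any map. Consider the polynomial G_𝒪(x) := ∏_{a ∈ 𝔽_q^×} (1 + a·x)^{𝒪(a)} ∈ 𝔽_q[x]. If the coefficients of x^1, x^2, …, x^{q−1} in G_𝒪(x) are all zero, then p divides 𝒪(a) for every a ∈ 𝔽_q^×. -/
import Mathlib

private lemma aux_derivative_prod {R : Type*} [CommSemiring R] {ι : Type*} [DecidableEq ι]
    (s : Finset ι) (f : ι → Polynomial R) :
    Polynomial.derivative (∏ i ∈ s, f i) =
      ∑ i ∈ s, (∏ j ∈ s.erase i, f j) * Polynomial.derivative (f i) := by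
  induction s using Finset.induction_on with
  | empty => simp
  | @insert a s ha ih =>
    rw [Finset.prod_insert ha, Polynomial.derivative_mul, ih, Finset.sum_insert ha,
      Finset.erase_insert ha, Finset.mul_sum]
    congr 1
    · exact mul_comm _ _
    · apply Finset.sum_congr rfl
      intro i hi
      rw [Finset.erase_insert_of_ne (by rintro rfl; exact ha hi),
        Finset.prod_insert (fun hmem => ha (Finset.mem_of_mem_erase hmem))]
      ring

open scoped Classical in
/-- Let `𝒪 : 𝔽_q^× → ℤ_{≥0}` and `G_𝒪(x) = ∏_{a ∈ 𝔽_q^×} (1 + a x)^{𝒪(a)}`.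
If the coefficients of `x, x², …, x^{q-1}` in `G_𝒪` all vanish, then `p ∣ 𝒪(a)`
for every `a ∈ 𝔽_q^×`. -/
theorem stmt3 (p : ℕ) (hp : p.Prime) (F : Type*) [Field F] [Fintype F] [CharP F p]
    (O : Fˣ → ℕ)
    (h : ∀ i : ℕ, 1 ≤ i → i ≤ Fintype.card F - 1 →
      (∏ a : Fˣ, (1 + Polynomial.C (a : F) * Polynomial.X) ^ O a).coeff i = 0) :
    ∀ a : Fˣ, p ∣ O a := by
  classical
  intro a
  set q := Fintype.card F with hq
  have hq2 : 2 ≤ q := Fintype.one_lt_card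
  set G : Polynomial F := ∏ b : Fˣ, (1 + Polynomial.C (b : F) * Polynomial.X) ^ O b with hG
  set P : Polynomial F := ∏ b : Fˣ, (1 + Polynomial.C (b : F) * Polynomial.X) with hP
  set S : Polynomial F :=
    ∑ b : Fˣ, Polynomial.C ((O b : F) * (b : F)) *
      ∏ c ∈ Finset.univ.erase b, (1 + Polynomial.C (c : F) * Polynomial.X) with hS
  -- coefficient 0 of G is 1
  have hG0 : G.coeff 0 = 1 := by
    rw [hG, Polynomial.coeff_zero_eq_eval_zero]
    simp [Polynomial.eval_prod]
  -- coefficients of G below q, besides constant term 1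
  have hGc : ∀ i : ℕ, 1 ≤ i → i < q → G.coeff i = 0 := by
    intro i h1 h2
    exact h i h1 (by omega)
  -- derivative of G vanishes below q
  have hd : ∀ i : ℕ, i < q → (Polynomial.derivative G).coeff i = 0 := by
    intro i hi
    rw [Polynomial.coeff_derivative]
    rcases lt_or_eq_of_le (Nat.succ_le_of_lt hi) with h1 | h1
    · rw [hGc (i + 1) (by omega) h1, zero_mul]
    · have hcast : ((i : F) + 1) = ((q : ℕ) : F) := by rw [← h1]; push_cast; ring
      rw [hcast, hq, Nat.cast_card_eq_zero, mul_zero]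
  -- key identity
  have key : Polynomial.derivative G * P = G * S := by
    rw [hG, aux_derivative_prod, Finset.sum_mul, hS, Finset.mul_sum]
    apply Finset.sum_congr rfl
    intro b _
    have hPe : P = (1 + Polynomial.C (b : F) * Polynomial.X) *
        ∏ c ∈ Finset.univ.erase b, (1 + Polynomial.C (c : F) * Polynomial.X) := by
      rw [hP]
      exact (Finset.mul_prod_erase Finset.univ
        (fun c : Fˣ => 1 + Polynomial.C (c : F) * Polynomial.X) (Finset.mem_univ b)).symm
    have hGe : (∏ b : Fˣ, (1 + Polynomial.C (b : F) * Polynomial.X) ^ O b) =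
        (1 + Polynomial.C (b : F) * Polynomial.X) ^ O b *
        ∏ c ∈ Finset.univ.erase b, (1 + Polynomial.C (c : F) * Polynomial.X) ^ O c :=
      (Finset.mul_prod_erase Finset.univ
        (fun c : Fˣ => (1 + Polynomial.C (c : F) * Polynomial.X) ^ O c) (Finset.mem_univ b)).symm
    have hder : Polynomial.derivative ((1 + Polynomial.C (b : F) * Polynomial.X) ^ O b) =
        Polynomial.C ((O b : F)) * (1 + Polynomial.C (b : F) * Polynomial.X) ^ (O b - 1) *
          Polynomial.C (b : F) := by
      rw [Polynomial.derivative_pow]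
      simp
    rcases Nat.eq_zero_or_pos (O b) with h0 | h0
    · simp [h0]
    · have hpow : (1 + Polynomial.C (b : F) * Polynomial.X) ^ (O b - 1) *
          (1 + Polynomial.C (b : F) * Polynomial.X) =
          (1 + Polynomial.C (b : F) * Polynomial.X) ^ O b := by
        rw [← pow_succ, Nat.sub_add_cancel h0]
      rw [hder, hPe, hGe, Polynomial.C_mul, ← hpow]
      ring
  -- coefficients of S vanish below q
  have hSc : ∀ i : ℕ, i < q → S.coeff i = 0 := by
    intro i hi
    have h1 : (Polynomial.derivative G * P).coeff i = 0 := by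
      rw [Polynomial.coeff_mul]
      apply Finset.sum_eq_zero
      intro x hx
      have : x.1 ≤ i := Finset.HasAntidiagonal.antidiagonal.fst_le hx
      rw [hd x.1 (by omega), zero_mul]
    have h2 : (G * S).coeff i = S.coeff i := by
      have hsplit : G = 1 + (G - 1) := by ring
      rw [hsplit, add_mul, one_mul, Polynomial.coeff_add]
      have : ((G - 1) * S).coeff i = 0 := by
        rw [Polynomial.coeff_mul]
        apply Finset.sum_eq_zero
        intro x hx
        have hx1 : x.1 ≤ i := Finset.HasAntidiagonal.antidiagonal.fst_le hx
        have : (G - 1).coeff x.1 = 0 := by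
          rw [Polynomial.coeff_sub]
          rcases Nat.eq_zero_or_pos x.1 with h0 | h0
          · rw [h0, hG0, Polynomial.coeff_one]; simp
          · rw [hGc x.1 h0 (by omega), Polynomial.coeff_one]
            simp [Nat.pos_iff_ne_zero.mp h0]
        rw [this, zero_mul]
      rw [this, add_zero]
    rw [← h2, ← key, h1]
  -- degree bound on S
  have hSdeg : S.natDegree < q := by
    have : S.natDegree ≤ q - 2 := by
      rw [hS]
      apply Polynomial.natDegree_sum_le_of_forall_le
      intro b _
      calc (Polynomial.C ((O b : F) * (b : F)) *
            ∏ c ∈ Finset.univ.erase b, (1 + Polynomial.C (c : F) * Polynomial.X)).natDegree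
          ≤ (Polynomial.C ((O b : F) * (b : F))).natDegree +
            (∏ c ∈ Finset.univ.erase b, (1 + Polynomial.C (c : F) * Polynomial.X)).natDegree :=
            Polynomial.natDegree_mul_le
        _ ≤ 0 + ∑ c ∈ Finset.univ.erase b,
            (1 + Polynomial.C (c : F) * Polynomial.X).natDegree := by
            gcongr
            · exact le_of_eq (Polynomial.natDegree_C _)
            · exact Polynomial.natDegree_prod_le _ _
        _ ≤ 0 + ∑ c ∈ Finset.univ.erase b, 1 := by
            gcongr with c hc
            calc (1 + Polynomial.C (c : F) * Polynomial.X).natDegree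
                ≤ max (1 : Polynomial F).natDegree
                  (Polynomial.C (c : F) * Polynomial.X).natDegree :=
                  Polynomial.natDegree_add_le _ _
              _ ≤ 1 := by
                  simp only [Polynomial.natDegree_one, max_le_iff]
                  exact ⟨Nat.zero_le _, (Polynomial.natDegree_C_mul_le _ _).trans
                    (le_of_eq Polynomial.natDegree_X)⟩
        _ = (Finset.univ.erase b).card := by simp
        _ ≤ q - 2 := by
            rw [Finset.card_erase_of_mem (Finset.mem_univ b), Finset.card_univ,
              Fintype.card_units]
            omega
    omega
  -- hence S = 0
  have hS0 : S = 0 := by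
    ext i
    rw [Polynomial.coeff_zero]
    rcases lt_or_ge i q with hi | hi
    · exact hSc i hi
    · exact Polynomial.coeff_eq_zero_of_natDegree_lt (by omega)
  -- evaluate at -a⁻¹
  have heval : Polynomial.eval (-((a⁻¹ : Fˣ) : F)) S = 0 := by rw [hS0]; simp
  rw [hS, Polynomial.eval_finset_sum] at heval
  have hterm : ∀ b : Fˣ, b ≠ a →
      Polynomial.eval (-((a⁻¹ : Fˣ) : F))
        (Polynomial.C ((O b : F) * (b : F)) *
          ∏ c ∈ Finset.univ.erase b, (1 + Polynomial.C (c : F) * Polynomial.X)) = 0 := by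
    intro b hb
    rw [Polynomial.eval_mul, Polynomial.eval_prod]
    have hmul : ((a : Fˣ) : F) * ((a⁻¹ : Fˣ) : F) = 1 := Units.mul_inv a
    have hz : Polynomial.eval (-((a⁻¹ : Fˣ) : F))
        (1 + Polynomial.C ((a : Fˣ) : F) * Polynomial.X) = 0 := by
      simp only [Polynomial.eval_add, Polynomial.eval_one, Polynomial.eval_mul,
        Polynomial.eval_C, Polynomial.eval_X]
      rw [mul_neg, hmul]
      ring
    rw [Finset.prod_eq_zero (Finset.mem_erase.mpr ⟨Ne.symm hb, Finset.mem_univ a⟩) hz,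
      mul_zero]
  have hsingle : Polynomial.eval (-((a⁻¹ : Fˣ) : F))
      (Polynomial.C ((O a : F) * (a : F)) *
        ∏ c ∈ Finset.univ.erase a, (1 + Polynomial.C (c : F) * Polynomial.X)) = 0 := by
    rw [← heval]
    symm
    exact Finset.sum_eq_single a (fun b _ hb => hterm b hb)
      (fun hna => absurd (Finset.mem_univ a) hna)
  rw [Polynomial.eval_mul, Polynomial.eval_C, Polynomial.eval_prod] at hsingle
  have hprod : ∀ c ∈ Finset.univ.erase a,
      Polynomial.eval (-((a⁻¹ : Fˣ) : F))
        (1 + Polynomial.C ((c : Fˣ) : F) * Polynomial.X) ≠ 0 := by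
    intro c hc
    simp only [Polynomial.eval_add, Polynomial.eval_one, Polynomial.eval_mul,
      Polynomial.eval_C, Polynomial.eval_X]
    intro hzero
    apply (Finset.mem_erase.mp hc).1
    have h1 : (c : F) * ((a⁻¹ : Fˣ) : F) = 1 := by linear_combination -hzero
    have h2 : (c : F) = (a : F) := by
      have h3 := congrArg (· * ((a : Fˣ) : F)) h1
      simpa [mul_assoc, Units.inv_mul] using h3
    exact Units.ext h2
  have hne : (∏ c ∈ Finset.univ.erase a,
      Polynomial.eval (-((a⁻¹ : Fˣ) : F))
        (1 + Polynomial.C ((c : Fˣ) : F) * Polynomial.X)) ≠ 0 :=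
    Finset.prod_ne_zero_iff.mpr hprod
  have hOa : (O a : F) = 0 := by
    have hane : ((a : Fˣ) : F) ≠ 0 := Units.ne_zero a
    rcases mul_eq_zero.mp hsingle with h1 | h2
    · rcases mul_eq_zero.mp h1 with h3 | h4
      · exact h3
      · exact absurd h4 hane
    · exact absurd h2 hne
  exact (CharP.cast_eq_zero_iff F p (O a)).mp hOa
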